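/- arXiv:0907.1272 — 4 statements merged into one kernel-verified Lean document; each statement's English description precedes it below -/
import Mathlib

section
/- Every finite simple graph admits a nowhere-harmonic 2-coloring, i.e., a labeling of its vertices with values in {1,2} such that no vertex's label equals the average of the labels of its neighbors (vertices with no neighbors are vacuously fine). -/
/-- Every finite simple graph admits a nowhere-harmonic 2-coloring. -/
theorem stmt0 {V : Type*} [Fintype V] [DecidableEq V] (G : SimpleGraph V)
    [DecidableRel G.Adj] :
    ∃ c : V → ℕ, (∀ v, c v = 1 ∨ c v = 2) ∧
      ∀ v, 0 < G.degree v →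
        (G.degree v : ℚ) * c v ≠ ∑ w ∈ G.neighborFinset v, (c w : ℚ) := by
  classical
  obtain ⟨S, hS, hmax⟩ := Finset.exists_maximal (s :=
    ((Finset.univ : Finset (Finset V)).filter
      (fun s => ∀ a ∈ s, ∀ b ∈ s, ¬ G.Adj a b)))
    ⟨∅, by simp⟩
  simp only [Finset.mem_filter, Finset.mem_univ, true_and] at hS
  refine ⟨fun v => if v ∈ S then 1 else 2, fun v => by dsimp only; split <;> simp, ?_⟩
  intro v hv
  by_cases hvS : v ∈ S
  · have hsum : ∑ w ∈ G.neighborFinset v, (((if w ∈ S then 1 else 2 : ℕ)) : ℚ)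
        = 2 * G.degree v := by
      rw [Finset.sum_congr rfl (fun w hw => ?_), Finset.sum_const,
        SimpleGraph.card_neighborFinset_eq_degree, nsmul_eq_mul, mul_comm]
      have hwS : w ∉ S := fun hwS =>
        hS v hvS w hwS ((SimpleGraph.mem_neighborFinset _ _ _).1 hw)
      simp [hwS]
    rw [hsum]
    simp only [hvS, if_true]
    intro h
    have hd : (0 : ℚ) < G.degree v := by exact_mod_cast hv
    push_cast at h
    linarith
  · -- there is a neighbor in S
    have hnotind : ¬ ∀ a ∈ insert v S, ∀ b ∈ insert v S, ¬ G.Adj a b := by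
      intro hind
      exact hvS (hmax (by simpa using hind)
        (Finset.subset_insert v S) (Finset.mem_insert_self v S))
    push_neg at hnotind
    obtain ⟨a, ha, b, hb, hab⟩ := hnotind
    have : ∃ w ∈ S, G.Adj v w := by
      rcases Finset.mem_insert.1 ha with rfl | haS
      · rcases Finset.mem_insert.1 hb with rfl | hbS
        · exact absurd hab (G.irrefl)
        · exact ⟨b, hbS, hab⟩
      · rcases Finset.mem_insert.1 hb with rfl | hbS
        · exact ⟨a, haS, hab.symm⟩
        · exact absurd hab (hS a haS b hbS)
    obtain ⟨w, hwS, hadj⟩ := this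
    have hwmem : w ∈ G.neighborFinset v := (SimpleGraph.mem_neighborFinset _ _ _).2 hadj
    have hlt : ∑ x ∈ G.neighborFinset v, (((if x ∈ S then 1 else 2 : ℕ)) : ℚ)
        < ∑ _x ∈ G.neighborFinset v, (2 : ℚ) := by
      refine Finset.sum_lt_sum (fun i _ => ?_) ⟨w, hwmem, ?_⟩
      · split <;> norm_num
      · simp [hwS]
    rw [Finset.sum_const, SimpleGraph.card_neighborFinset_eq_degree,
      nsmul_eq_mul] at hlt
    simp only [hvS, if_false]
    intro h
    simp only [Nat.cast_ofNat] at h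
    rw [h] at hlt
    exact lt_irrefl _ hlt
end

section
/- For a graph G with at least one edge, the number of nowhere-harmonic m-colorings ℏ_G(m) is even for every m ≥ 1. -/
lemma even_card_aux {α : Type*} [DecidableEq α] (f : α → α) :
    ∀ s : Finset α, (∀ a ∈ s, f a ∈ s) → (∀ a ∈ s, f (f a) = a) → (∀ a ∈ s, f a ≠ a) →
      Even s.card := by
  intro s
  induction s using Finset.strongInduction with
  | _ s ih =>
    intro h1 h2 h3
    rcases s.eq_empty_or_nonempty with rfl | ⟨a, ha⟩
    · simp
    · have hfa : f a ∈ s := h1 a ha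
      have hne : f a ≠ a := h3 a ha
      set t := (s.erase a).erase (f a) with ht
      have hmem : ∀ b, b ∈ t ↔ b ≠ f a ∧ b ≠ a ∧ b ∈ s := by
        intro b; simp [ht, Finset.mem_erase, and_assoc]
      have hsub : t ⊂ s := by
        constructor
        · intro b hb; exact ((hmem b).1 hb).2.2
        · intro hs
          have : a ∈ t := hs ha
          exact ((hmem a).1 this).2.1 rfl
      have hcard : s.card = t.card + 2 := by
        have h1' : (s.erase a).card + 1 = s.card := Finset.card_erase_add_one ha
        have hfa' : f a ∈ s.erase a := Finset.mem_erase.2 ⟨hne, hfa⟩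
        have h2' : t.card + 1 = (s.erase a).card := Finset.card_erase_add_one hfa'
        omega
      have het : Even t.card := by
        apply ih t hsub
        · intro b hb
          obtain ⟨hb1, hb2, hb3⟩ := (hmem b).1 hb
          refine (hmem (f b)).2 ⟨?_, ?_, h1 b hb3⟩
          · intro h; exact hb2 (by rw [← h2 b hb3, h, h2 a ha])
          · intro h; exact hb1 (by rw [← h2 b hb3, h])
        · intro b hb; exact h2 b ((hmem b).1 hb).2.2
        · intro b hb; exact h3 b ((hmem b).1 hb).2.2
      rw [hcard]; exact het.add even_two

/-- For a graph with at least one edge, the number of nowhere-harmonic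
m-colorings is even for every m ≥ 1. -/
theorem stmt3 {V : Type*} [Fintype V] [DecidableEq V] (G : SimpleGraph V)
    [DecidableRel G.Adj] (hE : G.edgeSet.Nonempty) (m : ℕ) (hm : 1 ≤ m) :
    Even ((Finset.univ.filter (fun c : V → Fin m =>
      ∀ v, 0 < G.degree v →
        (G.degree v : ℚ) * ((c v : ℕ) + 1) ≠
          ∑ w ∈ G.neighborFinset v, ((c w : ℕ) + 1 : ℚ))).card) := by
  obtain ⟨e, he⟩ := hE
  induction e with
  | _ u w =>
  rw [SimpleGraph.mem_edgeSet] at he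
  have hdegu : 0 < G.degree u := by
    rw [SimpleGraph.degree_pos_iff_exists_adj]; exact ⟨w, he⟩
  -- key cast identity
  have key : ∀ i : Fin m, (((Fin.rev i : Fin m) : ℕ) + 1 : ℚ) = (m : ℚ) - (i : ℕ) := by
    intro i
    have h1 : ((Fin.rev i : Fin m) : ℕ) = m - 1 - (i : ℕ) := by
      simp [Fin.rev]; omega
    have h2 : (i : ℕ) < m := i.isLt
    rw [h1, Nat.cast_sub (by omega), Nat.cast_sub (by omega : 1 ≤ m), Nat.cast_one]
    ring
  apply even_card_aux (fun c => fun v => Fin.rev (c v))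
  · intro c hc
    simp only [Finset.mem_filter, Finset.mem_univ, true_and] at hc ⊢
    intro v hv heq
    apply hc v hv
    simp only [key] at heq
    rw [Finset.sum_sub_distrib, Finset.sum_const, nsmul_eq_mul,
      SimpleGraph.card_neighborFinset_eq_degree] at heq
    rw [Finset.sum_add_distrib, Finset.sum_const, nsmul_eq_mul,
      SimpleGraph.card_neighborFinset_eq_degree, mul_one]
    ring_nf at heq ⊢
    try linarith
  · intro c hc
    funext v; exact Fin.rev_rev (c v)
  · intro c hc hfix
    simp only [Finset.mem_filter, Finset.mem_univ, true_and] at hc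
    apply hc u hdegu
    have hconst : ∀ v : V, 2 * (((c v : ℕ) : ℚ) + 1) = (m : ℚ) + 1 := by
      intro v
      have : Fin.rev (c v) = c v := congrFun hfix v
      have h := key (c v)
      rw [this] at h
      linarith [h]
    have hcu : ((c u : ℕ) : ℚ) + 1 = ((m : ℚ) + 1) / 2 := by
      have := hconst u; linarith
    calc (G.degree u : ℚ) * ((c u : ℕ) + 1)
        = ∑ w ∈ G.neighborFinset u, (((m:ℚ)+1)/2) := by
          rw [Finset.sum_const, nsmul_eq_mul, SimpleGraph.card_neighborFinset_eq_degree, hcu]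
      _ = ∑ w ∈ G.neighborFinset u, (((c w : ℕ) : ℚ) + 1) := by
          apply Finset.sum_congr rfl
          intro x _
          have := hconst x; linarith
end

section
/- For a connected finite simple graph G on n ≥ 2 vertices, for every sign vector s ∈ {±1}^V that is not constant (not all +1 and not all −1), there exists c : V → ℝ such that s(v)·(Lc)(v) > 0 for every v; consequently the image of the Laplacian L meets exactly 2^n − 2 of the 2^n open orthants of ℝ^V. -/
open Matrix Finset

private noncomputable def sumL (V : Type*) [Fintype V] : (V → ℝ) →ₗ[ℝ] ℝ :=
  ∑ v : V, LinearMap.proj v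

private lemma sumL_apply {V : Type*} [Fintype V] (x : V → ℝ) : sumL V x = ∑ v, x v := by
  simp [sumL]

private lemma lap_sum_zero {V : Type*} [Fintype V] [DecidableEq V] (G : SimpleGraph V)
    [DecidableRel G.Adj] (c : V → ℝ) : ∑ v, (G.lapMatrix ℝ *ᵥ c) v = 0 := by
  have h : ∑ v, (G.lapMatrix ℝ *ᵥ c) v = (fun _ : V => (1:ℝ)) ⬝ᵥ (G.lapMatrix ℝ *ᵥ c) := by
    simp [dotProduct]
  rw [h, Matrix.dotProduct_mulVec, ← Matrix.mulVec_transpose,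
    (G.isSymm_lapMatrix (R := ℝ)).eq, G.lapMatrix_mulVec_const_eq_zero, zero_dotProduct]

private lemma lap_surj_on_sum_zero {V : Type*} [Fintype V] [DecidableEq V] (G : SimpleGraph V)
    [DecidableRel G.Adj] (hG : G.Connected) (x : V → ℝ) (hx : ∑ v, x v = 0) :
    ∃ c : V → ℝ, G.lapMatrix ℝ *ᵥ c = x := by
  obtain ⟨v0⟩ := hG.nonempty
  have hker : Module.finrank ℝ (LinearMap.ker (Matrix.toLin' (G.lapMatrix ℝ))) = 1 := by
    rw [← SimpleGraph.card_connectedComponent_eq_finrank_ker_toLin'_lapMatrix]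
    refine Fintype.card_eq_one_iff.mpr ⟨SimpleGraph.connectedComponentMk G v0, ?_⟩
    intro c
    refine c.ind (fun w => ?_)
    exact SimpleGraph.ConnectedComponent.sound (hG.preconnected w v0)
  have hle : LinearMap.range (Matrix.toLin' (G.lapMatrix ℝ)) ≤ LinearMap.ker (sumL V) := by
    rintro _ ⟨c, rfl⟩
    rw [LinearMap.mem_ker, Matrix.toLin'_apply, sumL_apply]
    exact lap_sum_zero G c
  have hsurj : LinearMap.range (sumL V) = ⊤ := by
    rw [LinearMap.range_eq_top]
    intro r
    refine ⟨Pi.single v0 r, ?_⟩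
    rw [sumL_apply]
    simp [Finset.sum_pi_single]
  have hrank1 : Module.finrank ℝ (LinearMap.range (sumL V)) = 1 := by
    rw [hsurj, finrank_top, Module.finrank_self]
  have h1 := LinearMap.finrank_range_add_finrank_ker (Matrix.toLin' (G.lapMatrix ℝ))
  have h2 := LinearMap.finrank_range_add_finrank_ker (sumL V)
  rw [Module.finrank_fintype_fun_eq_card, hker] at h1
  rw [Module.finrank_fintype_fun_eq_card, hrank1] at h2
  have heq : LinearMap.range (Matrix.toLin' (G.lapMatrix ℝ)) = LinearMap.ker (sumL V) :=
    Submodule.eq_of_le_of_finrank_le hle (by omega)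
  have hxmem : x ∈ LinearMap.ker (sumL V) := by rw [LinearMap.mem_ker, sumL_apply]; exact hx
  rw [← heq] at hxmem
  obtain ⟨c, hc⟩ := hxmem
  exact ⟨c, by rw [← Matrix.toLin'_apply]; exact hc⟩

private lemma lap_exists {V : Type*} [Fintype V] [DecidableEq V] (G : SimpleGraph V)
    [DecidableRel G.Adj] (hG : G.Connected) (s : V → Bool) (hs : ∃ u v, s u ≠ s v) :
    ∃ c : V → ℝ, ∀ v, (if s v then (1 : ℝ) else -1) *
      ((G.degree v : ℝ) * c v - ∑ w ∈ G.neighborFinset v, c w) > 0 := by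
  classical
  set T : Finset V := Finset.univ.filter (fun v => s v = true) with hT
  set n : ℕ := Fintype.card V
  set k : ℕ := T.card with hk
  obtain ⟨u, v, huv⟩ := hs
  have hk1 : 1 ≤ k := by
    rcases Bool.eq_false_or_eq_true (s u) with h | h
    · exact Finset.card_pos.mpr ⟨u, by simp [hT, h]⟩
    · have hv : s v = true := by
        cases hsv : s v
        · exact absurd (by rw [h, hsv]) huv
        · rfl
      exact Finset.card_pos.mpr ⟨v, by simp [hT, hv]⟩
  have hkn : k < n := by
    have hTne : T ≠ Finset.univ := by
      intro hTu
      rcases Bool.eq_false_or_eq_true (s u) with h | h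
      · have hv : v ∈ T := hTu ▸ Finset.mem_univ v
        rw [hT, Finset.mem_filter] at hv
        exact huv (by rw [h, hv.2])
      · have hu : u ∈ T := hTu ▸ Finset.mem_univ u
        rw [hT, Finset.mem_filter] at hu
        rw [hu.2] at h
        exact Bool.noConfusion h
    exact lt_of_le_of_ne (Finset.card_le_univ T) (fun hc => hTne (Finset.eq_univ_of_card T hc))
  set x : V → ℝ := fun v => if s v then ((n : ℝ) - k) else -(k : ℝ) with hxdef
  have hsum : ∑ w, x w = 0 := by
    rw [hxdef]
    rw [Finset.sum_ite, Finset.sum_const, Finset.sum_const]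
    have h1 : (Finset.univ.filter (fun v => s v = true)).card = k := rfl
    have h2 : (Finset.univ.filter (fun v => ¬ s v = true)).card = n - k := by
      have h3 := Finset.card_filter_add_card_filter_not
        (s := (Finset.univ : Finset V)) (p := fun v => s v = true)
      have h4 : (Finset.univ : Finset V).card = n := Finset.card_univ
      omega
    have hc1 : (Finset.univ.filter (fun v => s v)).card = k := by
      simpa using h1
    have hc2 : (Finset.univ.filter (fun v => ¬ s v)).card = n - k := by
      simpa using h2
    rw [hc1, hc2]
    have : ((n - k : ℕ) : ℝ) = (n : ℝ) - k := by
      rw [Nat.cast_sub hkn.le]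
    rw [nsmul_eq_mul, nsmul_eq_mul, this]
    ring
  obtain ⟨c, hc⟩ := lap_surj_on_sum_zero G hG x hsum
  refine ⟨c, fun w => ?_⟩
  have hcw : (G.degree w : ℝ) * c w - ∑ z ∈ G.neighborFinset w, c z = x w := by
    rw [← SimpleGraph.lapMatrix_mulVec_apply, hc]
  have hknR : (k : ℝ) < n := by exact_mod_cast hkn
  have hk1R : (0 : ℝ) < k := by exact_mod_cast hk1
  cases hsw : s w
  · have hxw : x w = -(k : ℝ) := by simp [hxdef, hsw]
    rw [hcw, hxw]
    have hif : (if (false : Bool) = true then (1:ℝ) else -1) = -1 := by norm_num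
    rw [hif]
    nlinarith
  · have hxw : x w = (n : ℝ) - k := by simp [hxdef, hsw]
    rw [hcw, hxw]
    have hif : (if (true : Bool) = true then (1:ℝ) else -1) = 1 := by norm_num
    rw [hif]
    nlinarith

/-- For a connected graph on n ≥ 2 vertices and every nonconstant sign vector
s ∈ {±1}^V, there is c with s(v)·(Lc)(v) > 0 for all v; consequently the image
of the Laplacian meets exactly 2^n - 2 of the 2^n open orthants. -/
theorem stmt12 {V : Type*} [Fintype V] [DecidableEq V] (G : SimpleGraph V)
    [DecidableRel G.Adj] (hG : G.Connected) (hn : 2 ≤ Fintype.card V) :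
    (∀ s : V → Bool, (∃ u v, s u ≠ s v) →
      ∃ c : V → ℝ, ∀ v, (if s v then (1 : ℝ) else -1) *
        ((G.degree v : ℝ) * c v - ∑ w ∈ G.neighborFinset v, c w) > 0) ∧
    Set.ncard {s : V → Bool | ∃ c : V → ℝ, ∀ v, (if s v then (1 : ℝ) else -1) *
        ((G.degree v : ℝ) * c v - ∑ w ∈ G.neighborFinset v, c w) > 0} =
      2 ^ Fintype.card V - 2 := by
  classical
  obtain ⟨v0⟩ := hG.nonempty
  refine ⟨fun s hs => lap_exists G hG s hs, ?_⟩
  -- the set equals univ minus the two constant sign vectors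
  have hconst : ∀ (s : V → Bool), (¬ ∃ u v, s u ≠ s v) →
      ¬ ∃ c : V → ℝ, ∀ v, (if s v then (1 : ℝ) else -1) *
        ((G.degree v : ℝ) * c v - ∑ w ∈ G.neighborFinset v, c w) > 0 := by
    intro s hs ⟨c, hc⟩
    push_neg at hs
    have hsum : ∑ v, ((G.degree v : ℝ) * c v - ∑ w ∈ G.neighborFinset v, c w) = 0 := by
      have := lap_sum_zero G c
      simpa [SimpleGraph.lapMatrix_mulVec_apply] using this
    cases h0 : s v0
    · have hpos : ∀ v ∈ Finset.univ, 0 < -((G.degree v : ℝ) * c v - ∑ w ∈ G.neighborFinset v, c w) := by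
        intro v _
        have := hc v
        rw [hs v v0, h0] at this
        simpa using this
      have := Finset.sum_pos hpos ⟨v0, Finset.mem_univ v0⟩
      rw [Finset.sum_neg_distrib, hsum] at this
      simp at this
    · have hpos : ∀ v ∈ Finset.univ, 0 < (G.degree v : ℝ) * c v - ∑ w ∈ G.neighborFinset v, c w := by
        intro v _
        have := hc v
        rw [hs v v0, h0] at this
        simpa using this
      have := Finset.sum_pos hpos ⟨v0, Finset.mem_univ v0⟩
      rw [hsum] at this
      simp at this
  have hset : {s : V → Bool | ∃ c : V → ℝ, ∀ v, (if s v then (1 : ℝ) else -1) *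
        ((G.degree v : ℝ) * c v - ∑ w ∈ G.neighborFinset v, c w) > 0} =
      Set.univ \ {(fun _ => true), (fun _ => false)} := by
    ext s
    simp only [Set.mem_setOf_eq, Set.mem_diff, Set.mem_univ, true_and, Set.mem_insert_iff,
      Set.mem_singleton_iff]
    constructor
    · intro hex hmem
      refine hconst s ?_ hex
      rintro ⟨u, v, huv⟩
      rcases hmem with h | h <;> · rw [h] at huv; exact huv rfl
    · intro hmem
      refine lap_exists G hG s ?_
      by_contra hnc
      push_neg at hnc
      rcases Bool.eq_false_or_eq_true (s v0) with h | h
      · exact hmem (Or.inl (funext fun v => (hnc v v0).trans h))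
      · exact hmem (Or.inr (funext fun v => (hnc v v0).trans h))
  rw [hset]
  have hne : (fun _ : V => true) ≠ (fun _ : V => false) := by
    intro h
    have := congrFun h v0
    simp at this
  rw [Set.ncard_diff (Set.subset_univ _) (Set.toFinite _), Set.ncard_univ,
    Nat.card_eq_fintype_card, Fintype.card_fun, Set.ncard_pair hne]
  simp
end

section
/- Let G be a connected graph on n ≥ 2 vertices, m ≥ 1, and for each m-coloring c of G let β(c) be the number of nonconstant vertex orientations compatible with c. Then Σ_c β(c) ≥ ℏ_G(m), with equality contributions: each nowhere-harmonic coloring contributes exactly 1 to the sum, and every coloring contributes at least 1. -/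
lemma aux_sum_key {V : Type*} [Fintype V] [DecidableEq V] (G : SimpleGraph V)
    [DecidableRel G.Adj] (f : V → ℚ) :
    ∑ v, ∑ w ∈ G.neighborFinset v, f w = ∑ v, (G.degree v : ℚ) * f v := by
  have h1 : ∀ v, ∑ w ∈ G.neighborFinset v, f w = ∑ w, if G.Adj v w then f w else 0 := by
    intro v
    rw [SimpleGraph.neighborFinset_eq_filter, Finset.sum_filter]
  simp_rw [h1]
  rw [Finset.sum_comm]
  refine Finset.sum_congr rfl fun w _ => ?_
  have : ∀ v, (if G.Adj v w then f w else 0) = (if G.Adj w v then f w else 0) := by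
    intro v; simp [G.adj_comm]
  simp_rw [this]
  rw [← Finset.sum_filter, ← SimpleGraph.neighborFinset_eq_filter,
    Finset.sum_const, SimpleGraph.card_neighborFinset_eq_degree]
  ring

/-- For a connected graph on n ≥ 2 vertices: every m-coloring is compatible
with at least one nonconstant vertex orientation (β(c) ≥ 1), every
nowhere-harmonic coloring is compatible with exactly one (β(c) = 1), and
consequently Σ_c β(c) ≥ ℏ_G(m). Colorings are c : V → Fin m with color value
(c v) + 1; orientations are ε : V → Bool (true = +1, false = -1). -/
theorem stmt18 {V : Type*} [Fintype V] [DecidableEq V] (G : SimpleGraph V)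
    [DecidableRel G.Adj] (hG : G.Connected) (hn : 2 ≤ Fintype.card V)
    (m : ℕ) (hm : 1 ≤ m) :
    (∀ c : V → Fin m, 1 ≤ (Finset.univ.filter (fun ε : V → Bool =>
        (∃ u v, ε u ≠ ε v) ∧ ∀ v,
          (ε v = true → (G.degree v : ℚ) * ((c v : ℕ) + 1) ≤
            ∑ w ∈ G.neighborFinset v, ((c w : ℕ) + 1 : ℚ)) ∧
          (ε v = false → (∑ w ∈ G.neighborFinset v, ((c w : ℕ) + 1 : ℚ)) ≤
            (G.degree v : ℚ) * ((c v : ℕ) + 1)))).card) ∧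
    (∀ c : V → Fin m,
      (∀ v, (G.degree v : ℚ) * ((c v : ℕ) + 1) ≠
        ∑ w ∈ G.neighborFinset v, ((c w : ℕ) + 1 : ℚ)) →
      (Finset.univ.filter (fun ε : V → Bool =>
        (∃ u v, ε u ≠ ε v) ∧ ∀ v,
          (ε v = true → (G.degree v : ℚ) * ((c v : ℕ) + 1) ≤
            ∑ w ∈ G.neighborFinset v, ((c w : ℕ) + 1 : ℚ)) ∧
          (ε v = false → (∑ w ∈ G.neighborFinset v, ((c w : ℕ) + 1 : ℚ)) ≤
            (G.degree v : ℚ) * ((c v : ℕ) + 1)))).card = 1) ∧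
    (Finset.univ.filter (fun c : V → Fin m =>
        ∀ v, (G.degree v : ℚ) * ((c v : ℕ) + 1) ≠
          ∑ w ∈ G.neighborFinset v, ((c w : ℕ) + 1 : ℚ))).card ≤
      ∑ c : V → Fin m, (Finset.univ.filter (fun ε : V → Bool =>
        (∃ u v, ε u ≠ ε v) ∧ ∀ v,
          (ε v = true → (G.degree v : ℚ) * ((c v : ℕ) + 1) ≤
            ∑ w ∈ G.neighborFinset v, ((c w : ℕ) + 1 : ℚ)) ∧
          (ε v = false → (∑ w ∈ G.neighborFinset v, ((c w : ℕ) + 1 : ℚ)) ≤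
            (G.degree v : ℚ) * ((c v : ℕ) + 1)))).card := by
  -- abbreviations
  set a : (V → Fin m) → V → ℚ := fun c v => (G.degree v : ℚ) * ((c v : ℕ) + 1) with ha
  set s : (V → Fin m) → V → ℚ := fun c v => ∑ w ∈ G.neighborFinset v, ((c w : ℕ) + 1 : ℚ)
    with hs
  have hsum : ∀ c : V → Fin m, ∑ v, s c v = ∑ v, a c v := by
    intro c
    exact aux_sum_key G (fun v => ((c v : ℕ) + 1 : ℚ))
  -- Part 1
  have part1 : ∀ c : V → Fin m, 1 ≤ (Finset.univ.filter (fun ε : V → Bool =>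
      (∃ u v, ε u ≠ ε v) ∧ ∀ v,
        (ε v = true → a c v ≤ s c v) ∧
        (ε v = false → s c v ≤ a c v))).card := by
    intro c
    rw [Nat.succ_le_iff, Finset.card_pos]
    by_cases hall : ∀ v, a c v = s c v
    · -- everything is harmonic: any nonconstant ε works
      obtain ⟨u, v, huv⟩ := Fintype.exists_pair_of_one_lt_card hn
      refine ⟨fun x => decide (x = u), Finset.mem_filter.mpr ⟨Finset.mem_univ _, ?_, ?_⟩⟩
      · exact ⟨u, v, by simp [huv, Ne.symm huv]⟩
      · intro w
        exact ⟨fun _ => (hall w).le, fun _ => (hall w).ge⟩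
    · push_neg at hall
      obtain ⟨v0, hv0⟩ := hall
      refine ⟨fun x => decide (a c x ≤ s c x), Finset.mem_filter.mpr
        ⟨Finset.mem_univ _, ?_, ?_⟩⟩
      · -- nonconstant
        by_contra hcon
        push_neg at hcon
        have hcon' : ∀ u v : V, decide (a c u ≤ s c u) = decide (a c v ≤ s c v) := by
          intro u v
          by_contra h
          exact h (by simpa using (hcon u v))
        rcases lt_or_gt_of_ne hv0 with h0 | h0
        ·
          have hd : ∀ v, decide (a c v ≤ s c v) = true := by
            intro v
            rw [hcon' v v0]
            simp [h0.le]
          have hle : ∀ v ∈ Finset.univ, a c v ≤ s c v := by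
            intro v _
            simpa using hd v
          have : ∑ v, a c v < ∑ v, s c v :=
            Finset.sum_lt_sum hle ⟨v0, Finset.mem_univ _, h0⟩
          rw [hsum c] at this
          exact lt_irrefl _ this
        · have hd : ∀ v, decide (a c v ≤ s c v) = false := by
            intro v
            rw [hcon' v v0]
            simp [h0, not_le.mpr h0]
          have hle : ∀ v ∈ Finset.univ, s c v ≤ a c v := by
            intro v _
            have := hd v
            simp only [decide_eq_false_iff_not, not_le] at this
            exact this.le
          have : ∑ v, s c v < ∑ v, a c v := by
            refine Finset.sum_lt_sum hle ⟨v0, Finset.mem_univ _, ?_⟩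
            have := hd v0
            simp only [decide_eq_false_iff_not, not_le] at this
            exact this
          rw [hsum c] at this
          exact lt_irrefl _ this
      · intro v
        constructor
        · intro h; simpa using h
        · intro h
          simp only [decide_eq_false_iff_not, not_le] at h
          exact h.le
  refine ⟨part1, ?_, ?_⟩
  · -- Part 2
    intro c hc
    have hval : ∀ ε : V → Bool, ε ∈ (Finset.univ.filter (fun ε : V → Bool =>
        (∃ u v, ε u ≠ ε v) ∧ ∀ v,
          (ε v = true → a c v ≤ s c v) ∧
          (ε v = false → s c v ≤ a c v))) → ε = fun x => decide (a c x ≤ s c x) := by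
      intro ε hε
      rw [Finset.mem_filter] at hε
      obtain ⟨-, -, hcomp⟩ := hε
      funext v
      cases hv : ε v with
      | true =>
        have := (hcomp v).1 hv
        simp [this]
      | false =>
        have h2 := (hcomp v).2 hv
        have : ¬ (a c v ≤ s c v) := fun h => hc v (le_antisymm h h2)
        simp [this]
    have h1 := part1 c
    have h2 : (Finset.univ.filter (fun ε : V → Bool =>
        (∃ u v, ε u ≠ ε v) ∧ ∀ v,
          (ε v = true → a c v ≤ s c v) ∧
          (ε v = false → s c v ≤ a c v))).card ≤ 1 := by
      rw [Finset.card_le_one]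
      intro x hx y hy
      rw [hval x hx, hval y hy]
    exact le_antisymm h2 h1
  · -- Part 3
    calc (Finset.univ.filter (fun c : V → Fin m => ∀ v, a c v ≠ s c v)).card
        = ∑ c ∈ Finset.univ.filter (fun c : V → Fin m => ∀ v, a c v ≠ s c v), 1 := by
          simp
      _ ≤ ∑ c ∈ Finset.univ.filter (fun c : V → Fin m => ∀ v, a c v ≠ s c v),
            (Finset.univ.filter (fun ε : V → Bool =>
              (∃ u v, ε u ≠ ε v) ∧ ∀ v,
                (ε v = true → a c v ≤ s c v) ∧
                (ε v = false → s c v ≤ a c v))).card :=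
          Finset.sum_le_sum (fun c _ => part1 c)
      _ ≤ ∑ c : V → Fin m, (Finset.univ.filter (fun ε : V → Bool =>
              (∃ u v, ε u ≠ ε v) ∧ ∀ v,
                (ε v = true → a c v ≤ s c v) ∧
                (ε v = false → s c v ≤ a c v))).card :=
          Finset.sum_le_sum_of_subset (Finset.filter_subset _ _)
end
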